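/- Let d = 2. Then R_sharp yields an ideal MIP formulation of S_max: (i) the projection onto the (x, y)-coordinates of {(x,y,z) ∈ R_sharp : z ∈ {0,1}^2} equals S_max; and (ii) every extreme point (x, y, z) of R_sharp satisfies z ∈ {0,1}^2. -/

import Mathlib

open scoped Pointwise

noncomputable section

/-- Dot product on `Fin n → ℝ`. -/
def dotp {n : ℕ} (w x : Fin n → ℝ) : ℝ := ∑ i, w i * x i

/-- The affine function `f^k(x) = w^k ⬝ x + b^k`. -/
def affK {η d : ℕ} (w : Fin d → Fin η → ℝ) (b : Fin d → ℝ) (k : Fin d) (x : Fin η → ℝ) : ℝ :=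
  dotp (w k) x + b k

/-- The set `R_sharp`. -/
def RsharpSet {η d : ℕ} (D : Set (Fin η → ℝ)) (w : Fin d → Fin η → ℝ) (b : Fin d → ℝ) :
    Set ((Fin η → ℝ) × ℝ × (Fin d → ℝ)) :=
  {p | p.1 ∈ D ∧ p.2.2 ∈ stdSimplex ℝ (Fin d)
    ∧ (∀ k, affK w b k p.1 ≤ p.2.1)
    ∧ ∃ xt : Fin d → Fin η → ℝ, (∀ k, xt k ∈ p.2.2 k • D) ∧ p.1 = ∑ k, xt k
        ∧ p.2.1 ≤ ∑ k, (dotp (w k) (xt k) + b k * p.2.2 k)}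

lemma dotp_add' {n : ℕ} (w x y : Fin n → ℝ) : dotp w (x + y) = dotp w x + dotp w y := by
  simp [dotp, mul_add, Finset.sum_add_distrib]

lemma dotp_smul' {n : ℕ} (c : ℝ) (w x : Fin n → ℝ) : dotp w (c • x) = c * dotp w x := by
  rw [dotp, dotp, Finset.mul_sum]
  refine Finset.sum_congr rfl fun i _ => ?_
  simp [Pi.smul_apply, smul_eq_mul]; ring

lemma affK_comb {η d : ℕ} (w : Fin d → Fin η → ℝ) (b : Fin d → ℝ) (k : Fin d)
    (a c : ℝ) (hac : a + c = 1) (u v : Fin η → ℝ) :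
    affK w b k (a • u + c • v) = a * affK w b k u + c * affK w b k v := by
  rw [affK, affK, affK, dotp_add', dotp_smul', dotp_smul']
  have : a = 1 - c := by linarith
  subst this; ring

lemma convex_of_poly {η : ℕ} {D : Set (Fin η → ℝ)}
    (hDpoly : ∃ (m : ℕ) (A : Fin m → Fin η → ℝ) (c : Fin m → ℝ),
      D = {x | ∀ i, dotp (A i) x ≤ c i}) : Convex ℝ D := by
  obtain ⟨m, A, c, rfl⟩ := hDpoly
  intro x hx y hy a b' ha hb hab i
  have h1 : dotp (A i) (a • x + b' • y) = a * dotp (A i) x + b' * dotp (A i) y := by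
    rw [dotp_add', dotp_smul', dotp_smul']
  simp only [Set.mem_setOf_eq] at hx hy ⊢
  rw [h1]
  have hc : a * c i + b' * c i = c i := by rw [← add_mul, hab, one_mul]
  nlinarith [mul_le_mul_of_nonneg_left (hx i) ha, mul_le_mul_of_nonneg_left (hy i) hb]

lemma mem_aux {η : ℕ} (w : Fin 2 → Fin η → ℝ) (b : Fin 2 → ℝ) (D : Set (Fin η → ℝ))
    (hDconv : Convex ℝ D)
    (u0 u1 : Fin η → ℝ) (h0 : u0 ∈ D) (h1 : u1 ∈ D) (t yy : ℝ)
    (ht0 : 0 ≤ t) (ht1 : t ≤ 1)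
    (hub : yy ≤ t * affK w b 0 u0 + (1 - t) * affK w b 1 u1)
    (hlb : ∀ k, affK w b k (t • u0 + (1 - t) • u1) ≤ yy) :
    (t • u0 + (1 - t) • u1, yy, fun k : Fin 2 => if k = 0 then t else 1 - t)
      ∈ RsharpSet D w b := by
  refine ⟨hDconv h0 h1 ht0 (by linarith) (by ring), ⟨?_, ?_⟩, hlb,
    ![t • u0, (1 - t) • u1], ?_, ?_, ?_⟩
  · intro k; fin_cases k <;> simp <;> linarith
  · simp [Fin.sum_univ_two]
  · intro k; fin_cases k
    · simpa using Set.smul_mem_smul_set (a := t) h0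
    · simpa using Set.smul_mem_smul_set (a := 1 - t) h1
  · simp [Fin.sum_univ_two]
  · simp only [Fin.sum_univ_two, Matrix.cons_val_zero, Matrix.cons_val_one, Matrix.head_cons,
      dotp_smul']
    simp only [affK] at hub
    have e0 : (if True then t else 1 - t) = t := by simp
    have e1 : (if (1:Fin 2) = 0 then t else 1 - t) = 1 - t := by simp [Fin.ext_iff]
    rw [e0, e1]; nlinarith [hub]

lemma not_extreme_aux {η : ℕ} (w : Fin 2 → Fin η → ℝ) (b : Fin 2 → ℝ) (D : Set (Fin η → ℝ))
    (hDconv : Convex ℝ D)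
    (p : (Fin η → ℝ) × ℝ × (Fin 2 → ℝ))
    (u0 u1 : Fin η → ℝ) (hu0 : u0 ∈ D) (hu1 : u1 ∈ D) (ε μ : ℝ) (hε : 0 < ε)
    (hx : p.1 = p.2.2 0 • u0 + (1 - p.2.2 0) • u1)
    (hz1 : p.2.2 1 = 1 - p.2.2 0)
    (hb0 : ε ≤ p.2.2 0) (hb1 : ε ≤ 1 - p.2.2 0)
    (hubp : p.2.1 + ε * μ ≤
      (p.2.2 0 + ε) * affK w b 0 u0 + (1 - p.2.2 0 - ε) * affK w b 1 u1)
    (hubm : p.2.1 + (-ε) * μ ≤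
      (p.2.2 0 + (-ε)) * affK w b 0 u0 + (1 - p.2.2 0 - (-ε)) * affK w b 1 u1)
    (hlb0p : (p.2.2 0 + ε) * affK w b 0 u0 + (1 - p.2.2 0 - ε) * affK w b 0 u1
      ≤ p.2.1 + ε * μ)
    (hlb1p : (p.2.2 0 + ε) * affK w b 1 u0 + (1 - p.2.2 0 - ε) * affK w b 1 u1
      ≤ p.2.1 + ε * μ)
    (hlb0m : (p.2.2 0 + (-ε)) * affK w b 0 u0 + (1 - p.2.2 0 - (-ε)) * affK w b 0 u1
      ≤ p.2.1 + (-ε) * μ)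
    (hlb1m : (p.2.2 0 + (-ε)) * affK w b 1 u0 + (1 - p.2.2 0 - (-ε)) * affK w b 1 u1
      ≤ p.2.1 + (-ε) * μ) :
    p ∉ Set.extremePoints ℝ (RsharpSet D w b) := by
  intro hp
  have hub : ∀ s : ℝ, s = ε ∨ s = -ε →
      p.2.1 + s * μ ≤ (p.2.2 0 + s) * affK w b 0 u0 + (1 - p.2.2 0 - s) * affK w b 1 u1 := by
    rintro s (rfl | rfl) <;> assumption
  have hlb : ∀ s : ℝ, s = ε ∨ s = -ε → ∀ k,
      (p.2.2 0 + s) * affK w b k u0 + (1 - p.2.2 0 - s) * affK w b k u1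
        ≤ p.2.1 + s * μ := by
    rintro s (rfl | rfl) k <;> fin_cases k <;> assumption
  set L := p.2.2 0 with hL
  have key : ∀ s : ℝ, s = ε ∨ s = -ε →
      ((L + s) • u0 + (1 - (L + s)) • u1, p.2.1 + s * μ,
        fun k : Fin 2 => if k = 0 then L + s else 1 - (L + s)) ∈ RsharpSet D w b := by
    intro s hs
    have hs1 : 0 ≤ L + s := by rcases hs with rfl | rfl <;> linarith
    have hs2 : L + s ≤ 1 := by rcases hs with rfl | rfl <;> linarith
    refine mem_aux w b D hDconv u0 u1 hu0 hu1 (L + s) (p.2.1 + s * μ) hs1 hs2 ?_ ?_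
    · have := hub s hs
      nlinarith [this]
    · intro k
      rw [affK_comb w b k (L + s) (1 - (L + s)) (by ring) u0 u1]
      have := hlb s hs k
      nlinarith [this]
  have hqp := key ε (Or.inl rfl)
  have hqm := key (-ε) (Or.inr rfl)
  have hseg : p ∈ openSegment ℝ
      ((L + -ε) • u0 + (1 - (L + -ε)) • u1, p.2.1 + (-ε) * μ,
        fun k : Fin 2 => if k = 0 then L + -ε else 1 - (L + -ε))
      ((L + ε) • u0 + (1 - (L + ε)) • u1, p.2.1 + ε * μ,
        fun k : Fin 2 => if k = 0 then L + ε else 1 - (L + ε)) := by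
    refine ⟨1/2, 1/2, by norm_num, by norm_num, by norm_num, ?_⟩
    refine Prod.ext ?_ (Prod.ext ?_ ?_)
    · show (1/2 : ℝ) • ((L + -ε) • u0 + (1 - (L + -ε)) • u1)
        + (1/2 : ℝ) • ((L + ε) • u0 + (1 - (L + ε)) • u1) = p.1
      rw [hx]; module
    · show (1/2 : ℝ) * (p.2.1 + (-ε) * μ) + (1/2 : ℝ) * (p.2.1 + ε * μ) = p.2.1
      ring
    · show (1/2 : ℝ) • (fun k : Fin 2 => if k = 0 then L + -ε else 1 - (L + -ε))
        + (1/2 : ℝ) • (fun k : Fin 2 => if k = 0 then L + ε else 1 - (L + ε)) = p.2.2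
      funext k
      fin_cases k <;> simp [hz1] <;> ring
  have h2 := hp.2 hqp hqm (by rwa [openSegment_symm])
  have h0 := congrArg (fun r => r.2.2 0) h2
  simp only at h0
  have : L + ε = L := h0
  linarith

lemma abs_trick {ε g c : ℝ} (hε : 0 < ε) (he : ε ≤ c / (1 + |g|)) :
    ε * g ≤ c ∧ -(ε * g) ≤ c := by
  have h1 : (0:ℝ) < 1 + |g| := by positivity
  have h2 : ε * (1 + |g|) ≤ c := by
    rw [le_div_iff₀ h1] at he; linarith
  have h3 : ε * |g| ≤ c := by nlinarith [abs_nonneg g]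
  constructor
  · nlinarith [le_abs_self g]
  · nlinarith [neg_abs_le g]

set_option maxHeartbeats 2000000 in
theorem stmt7 {η : ℕ} (hη : 1 ≤ η)
    (w : Fin 2 → Fin η → ℝ) (b : Fin 2 → ℝ)
    (D : Set (Fin η → ℝ))
    (hDpoly : ∃ (m : ℕ) (A : Fin m → Fin η → ℝ) (c : Fin m → ℝ),
      D = {x | ∀ i, dotp (A i) x ≤ c i})
    (hDne : D.Nonempty) (hDbd : Bornology.IsBounded D)
    (hirr : ∀ k, ∃ x ∈ D, ∀ ℓ, ℓ ≠ k → affK w b ℓ x < affK w b k x) :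
    -- (i) validity
    ((fun p : (Fin η → ℝ) × ℝ × (Fin 2 → ℝ) => (p.1, p.2.1)) ''
        {p ∈ RsharpSet D w b | ∀ k, p.2.2 k = 0 ∨ p.2.2 k = 1}
      = {q : (Fin η → ℝ) × ℝ | q.1 ∈ D
          ∧ q.2 = max (dotp (w 0) q.1 + b 0) (dotp (w 1) q.1 + b 1)})
    -- (ii) every extreme point has binary z
    ∧ (∀ p ∈ Set.extremePoints ℝ (RsharpSet D w b),
        ∀ k, p.2.2 k = 0 ∨ p.2.2 k = 1) := by
  have hDconv : Convex ℝ D := convex_of_poly hDpoly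
  constructor
  · -- part (i)
    ext q
    constructor
    · rintro ⟨p, ⟨⟨hxD, hz, hlb, xt, hxt, hxsum, hub⟩, hbin⟩, hproj⟩
      have hzsum : p.2.2 0 + p.2.2 1 = 1 := by
        have := hz.2; rwa [Fin.sum_univ_two] at this
      rw [Fin.sum_univ_two] at hub hxsum
      have hmain : p.1 ∈ D ∧ p.2.1 = max (dotp (w 0) p.1 + b 0) (dotp (w 1) p.1 + b 1) := by
        have hlb0 := hlb 0
        have hlb1 := hlb 1
        simp only [affK] at hlb0 hlb1
        rcases hbin 0 with h | h
        · -- z0 = 0, z1 = 1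
          have h1 : p.2.2 1 = 1 := by linarith
          obtain ⟨v0, hv0D, hv0⟩ := Set.mem_smul_set.mp (hxt 0)
          obtain ⟨v1, hv1D, hv1⟩ := Set.mem_smul_set.mp (hxt 1)
          rw [h] at hv0
          rw [h1] at hv1
          rw [zero_smul] at hv0
          rw [one_smul] at hv1
          have hx1 : p.1 = v1 := by rw [hxsum, ← hv0, ← hv1, zero_add]
          have hub' : p.2.1 ≤ dotp (w 1) p.1 + b 1 := by
            rw [← hv0, ← hv1, h, h1, ← hx1] at hub
            have hz0 : dotp (w 0) (0 : Fin η → ℝ) = 0 := by simp [dotp]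
            rw [hz0] at hub; linarith
          refine ⟨hx1 ▸ hv1D, le_antisymm ?_ ?_⟩
          · exact le_max_of_le_right hub'
          · exact max_le hlb0 hlb1
        · -- z0 = 1, z1 = 0
          have h1 : p.2.2 1 = 0 := by linarith
          obtain ⟨v0, hv0D, hv0⟩ := Set.mem_smul_set.mp (hxt 0)
          obtain ⟨v1, hv1D, hv1⟩ := Set.mem_smul_set.mp (hxt 1)
          rw [h] at hv0
          rw [h1] at hv1
          rw [one_smul] at hv0
          rw [zero_smul] at hv1
          have hx1 : p.1 = v0 := by rw [hxsum, ← hv0, ← hv1, add_zero]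
          have hub' : p.2.1 ≤ dotp (w 0) p.1 + b 0 := by
            rw [← hv0, ← hv1, h, h1, ← hx1] at hub
            have hz0 : dotp (w 1) (0 : Fin η → ℝ) = 0 := by simp [dotp]
            rw [hz0] at hub; linarith
          refine ⟨hx1 ▸ hv0D, le_antisymm ?_ ?_⟩
          · exact le_max_of_le_left hub'
          · exact max_le hlb0 hlb1
      rw [← hproj]
      exact hmain
    · rintro ⟨hxD, hy⟩
      rcases le_total (affK w b 1 q.1) (affK w b 0 q.1) with hle | hle
      · have hmaxeq : q.2 = affK w b 0 q.1 := by
          rw [hy]; exact max_eq_left hle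
        refine ⟨((1:ℝ) • q.1 + (1 - (1:ℝ)) • q.1, q.2,
          fun k : Fin 2 => if k = 0 then (1:ℝ) else 1 - (1:ℝ)), ⟨?_, ?_⟩, ?_⟩
        · refine mem_aux w b D hDconv q.1 q.1 hxD hxD 1 q.2 (by norm_num) (by norm_num) ?_ ?_
          · rw [hmaxeq]; ring_nf; rfl
          · intro k
            rw [affK_comb w b k 1 (1 - 1) (by ring) q.1 q.1]
            have : affK w b k q.1 ≤ q.2 := by
              rw [hy]; fin_cases k
              · exact le_max_left _ _
              · exact le_max_right _ _
            nlinarith [this]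
        · intro k; fin_cases k <;> simp
        · simp only
          refine Prod.ext ?_ rfl
          show (1:ℝ) • q.1 + (1 - (1:ℝ)) • q.1 = q.1
          module
      · have hmaxeq : q.2 = affK w b 1 q.1 := by
          rw [hy]; exact max_eq_right hle
        refine ⟨((0:ℝ) • q.1 + (1 - (0:ℝ)) • q.1, q.2,
          fun k : Fin 2 => if k = 0 then (0:ℝ) else 1 - (0:ℝ)), ⟨?_, ?_⟩, ?_⟩
        · refine mem_aux w b D hDconv q.1 q.1 hxD hxD 0 q.2 (by norm_num) (by norm_num) ?_ ?_
          · rw [hmaxeq]; ring_nf; rfl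
          · intro k
            rw [affK_comb w b k 0 (1 - 0) (by ring) q.1 q.1]
            have : affK w b k q.1 ≤ q.2 := by
              rw [hy]; fin_cases k
              · exact le_max_left _ _
              · exact le_max_right _ _
            nlinarith [this]
        · intro k; fin_cases k <;> simp
        · simp only
          refine Prod.ext ?_ rfl
          show (0:ℝ) • q.1 + (1 - (0:ℝ)) • q.1 = q.1
          module
  · -- part (ii)
    intro p hp k
    by_contra hk
    push_neg at hk
    obtain ⟨hk0, hk1⟩ := hk
    obtain ⟨hxD, hz, hlb, xt, hxt, hxsum, hub⟩ := hp.1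
    have hzsum : p.2.2 0 + p.2.2 1 = 1 := by
      have := hz.2; rwa [Fin.sum_univ_two] at this
    have hz0nn := hz.1 0
    have hz1nn := hz.1 1
    have hL : 0 < p.2.2 0 ∧ p.2.2 0 < 1 := by
      fin_cases k
      · exact ⟨lt_of_le_of_ne hz0nn (Ne.symm hk0), lt_of_le_of_ne (by linarith) hk1⟩
      · have ha : 0 < p.2.2 1 := lt_of_le_of_ne hz1nn (Ne.symm hk0)
        have hb : p.2.2 1 < 1 := lt_of_le_of_ne (by linarith) hk1
        exact ⟨by linarith, by linarith⟩
    obtain ⟨hL0, hL1⟩ := hL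
    obtain ⟨u0, hu0D, hu0⟩ := Set.mem_smul_set.mp (hxt 0)
    obtain ⟨u1, hu1D, hu1⟩ := Set.mem_smul_set.mp (hxt 1)
    have hz1eq : p.2.2 1 = 1 - p.2.2 0 := by linarith
    have hx : p.1 = p.2.2 0 • u0 + (1 - p.2.2 0) • u1 := by
      rw [hxsum, Fin.sum_univ_two, ← hu0, ← hu1, hz1eq]
    have hubS : p.2.1 ≤ p.2.2 0 * affK w b 0 u0 + (1 - p.2.2 0) * affK w b 1 u1 := by
      rw [Fin.sum_univ_two, ← hu0, ← hu1, dotp_smul', dotp_smul', hz1eq] at hub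
      simp only [affK]; nlinarith [hub]
    have hF0 : affK w b 0 p.1 = p.2.2 0 * affK w b 0 u0 + (1 - p.2.2 0) * affK w b 0 u1 := by
      rw [hx]; exact affK_comb w b 0 _ _ (by ring) u0 u1
    have hF1 : affK w b 1 p.1 = p.2.2 0 * affK w b 1 u0 + (1 - p.2.2 0) * affK w b 1 u1 := by
      rw [hx]; exact affK_comb w b 1 _ _ (by ring) u0 u1
    have hlb0 := hlb 0
    have hlb1 := hlb 1
    rcases eq_or_lt_of_le hlb0 with h0 | h0 <;> rcases eq_or_lt_of_le hlb1 with h1 | h1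
    · -- Case A: both tight
      refine not_extreme_aux w b D hDconv p p.1 p.1 hxD hxD
        (min (p.2.2 0) (1 - p.2.2 0)) 0
        (lt_min hL0 (by linarith)) (by module) hz1eq
        (min_le_left _ _) (min_le_right _ _) ?_ ?_ ?_ ?_ ?_ ?_ hp <;>
        simp only [h0, h1] <;> nlinarith []
    · -- Case B2: h0 : affK0 = y, h1 : affK1 < y, mu = P0 - Q0
      obtain ⟨ε, hεpos, hεb0, hεb1, hA1a, hA1b⟩ :
          ∃ ε : ℝ, 0 < ε ∧ ε ≤ p.2.2 0 ∧ ε ≤ 1 - p.2.2 0 ∧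
            ε * ((affK w b 1 u0 - affK w b 1 u1) - (affK w b 0 u0 - affK w b 0 u1))
              ≤ p.2.1 - affK w b 1 p.1 ∧
            -(ε * ((affK w b 1 u0 - affK w b 1 u1) - (affK w b 0 u0 - affK w b 0 u1)))
              ≤ p.2.1 - affK w b 1 p.1 := by
        set g1 := (affK w b 1 u0 - affK w b 1 u1) - (affK w b 0 u0 - affK w b 0 u1) with hg1
        have hεp : (0:ℝ) < min (min (p.2.2 0) (1 - p.2.2 0))
            ((p.2.1 - affK w b 1 p.1) / (1 + |g1|)) :=
          lt_min (lt_min hL0 (by linarith)) (div_pos (by linarith) (by positivity))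
        have h := abs_trick hεp (min_le_right _ _)
        exact ⟨_, hεp, le_trans (min_le_left _ _) (min_le_left _ _),
          le_trans (min_le_left _ _) (min_le_right _ _), h.1, h.2⟩
      have hQ : affK w b 0 u1 ≤ affK w b 1 u1 := by
        have h' : (1 - p.2.2 0) * affK w b 0 u1 ≤ (1 - p.2.2 0) * affK w b 1 u1 := by
          nlinarith [hubS, hF0, h0]
        exact (mul_le_mul_iff_right₀ (by linarith : (0:ℝ) < 1 - p.2.2 0)).mp h'
      refine not_extreme_aux w b D hDconv p u0 u1 hu0D hu1D ε
        (affK w b 0 u0 - affK w b 0 u1) hεpos hx hz1eq hεb0 hεb1 ?_ ?_ ?_ ?_ ?_ ?_ hp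
      · nlinarith [mul_nonneg (by linarith : (0:ℝ) ≤ 1 - p.2.2 0 - ε)
          (sub_nonneg.mpr hQ), hF0, h0]
      · nlinarith [mul_nonneg (by linarith : (0:ℝ) ≤ 1 - p.2.2 0 + ε)
          (sub_nonneg.mpr hQ), hF0, h0]
      · nlinarith [hF0, h0]
      · nlinarith [hF1, hA1a]
      · nlinarith [hF0, h0]
      · nlinarith [hF1, hA1b]
    · -- Case B3: h0 : affK0 < y, h1 : affK1 = y, mu = P1 - Q1
      obtain ⟨ε, hεpos, hεb0, hεb1, hA0a, hA0b⟩ :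
          ∃ ε : ℝ, 0 < ε ∧ ε ≤ p.2.2 0 ∧ ε ≤ 1 - p.2.2 0 ∧
            ε * ((affK w b 0 u0 - affK w b 0 u1) - (affK w b 1 u0 - affK w b 1 u1))
              ≤ p.2.1 - affK w b 0 p.1 ∧
            -(ε * ((affK w b 0 u0 - affK w b 0 u1) - (affK w b 1 u0 - affK w b 1 u1)))
              ≤ p.2.1 - affK w b 0 p.1 := by
        set g0 := (affK w b 0 u0 - affK w b 0 u1) - (affK w b 1 u0 - affK w b 1 u1) with hg0
        have hεp : (0:ℝ) < min (min (p.2.2 0) (1 - p.2.2 0))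
            ((p.2.1 - affK w b 0 p.1) / (1 + |g0|)) :=
          lt_min (lt_min hL0 (by linarith)) (div_pos (by linarith) (by positivity))
        have h := abs_trick hεp (min_le_right _ _)
        exact ⟨_, hεp, le_trans (min_le_left _ _) (min_le_left _ _),
          le_trans (min_le_left _ _) (min_le_right _ _), h.1, h.2⟩
      have hP : affK w b 1 u0 ≤ affK w b 0 u0 := by
        have h' : p.2.2 0 * affK w b 1 u0 ≤ p.2.2 0 * affK w b 0 u0 := by
          nlinarith [hubS, hF1, h1]
        exact (mul_le_mul_iff_right₀ hL0).mp h'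
      refine not_extreme_aux w b D hDconv p u0 u1 hu0D hu1D ε
        (affK w b 1 u0 - affK w b 1 u1) hεpos hx hz1eq hεb0 hεb1 ?_ ?_ ?_ ?_ ?_ ?_ hp
      · nlinarith [mul_nonneg (by linarith : (0:ℝ) ≤ p.2.2 0 + ε)
          (sub_nonneg.mpr hP), hF1, h1]
      · nlinarith [mul_nonneg (by linarith : (0:ℝ) ≤ p.2.2 0 - ε)
          (sub_nonneg.mpr hP), hF1, h1]
      · nlinarith [hF0, hA0a]
      · nlinarith [hF1, h1]
      · nlinarith [hF0, hA0b]
      · nlinarith [hF1, h1]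
    · -- Case B1: both slack, mu = P0 - Q1
      obtain ⟨ε, hεpos, hεb0, hεb1, hA0a, hA0b, hA1a, hA1b⟩ :
          ∃ ε : ℝ, 0 < ε ∧ ε ≤ p.2.2 0 ∧ ε ≤ 1 - p.2.2 0 ∧
            ε * (affK w b 1 u1 - affK w b 0 u1) ≤ p.2.1 - affK w b 0 p.1 ∧
            -(ε * (affK w b 1 u1 - affK w b 0 u1)) ≤ p.2.1 - affK w b 0 p.1 ∧
            ε * (affK w b 1 u0 - affK w b 0 u0) ≤ p.2.1 - affK w b 1 p.1 ∧
            -(ε * (affK w b 1 u0 - affK w b 0 u0)) ≤ p.2.1 - affK w b 1 p.1 := by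
        set g0 := affK w b 1 u1 - affK w b 0 u1 with hg0
        set g1 := affK w b 1 u0 - affK w b 0 u0 with hg1
        have hεp : (0:ℝ) < min (min (p.2.2 0) (1 - p.2.2 0))
            (min ((p.2.1 - affK w b 0 p.1) / (1 + |g0|))
                 ((p.2.1 - affK w b 1 p.1) / (1 + |g1|))) :=
          lt_min (lt_min hL0 (by linarith))
            (lt_min (div_pos (by linarith) (by positivity))
                    (div_pos (by linarith) (by positivity)))
        have ha := abs_trick hεp (le_trans (min_le_right _ _) (min_le_left _ _))
        have hb := abs_trick hεp (le_trans (min_le_right _ _) (min_le_right _ _))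
        exact ⟨_, hεp, le_trans (min_le_left _ _) (min_le_left _ _),
          le_trans (min_le_left _ _) (min_le_right _ _), ha.1, ha.2, hb.1, hb.2⟩
      refine not_extreme_aux w b D hDconv p u0 u1 hu0D hu1D ε
        (affK w b 0 u0 - affK w b 1 u1) hεpos hx hz1eq hεb0 hεb1 ?_ ?_ ?_ ?_ ?_ ?_ hp
      · nlinarith [hubS]
      · nlinarith [hubS]
      · nlinarith [hF0, hA0a]
      · nlinarith [hF1, hA1a]
      · nlinarith [hF0, hA0b]
      · nlinarith [hF1, hA1b]
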